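/- Let x(u,v) = γ(u) + γ̃(v) be the translation surface of framed curves (γ, ν₁, ν₂) and (γ̃, ν̃₁, ν̃₂) with curvatures (ℓ, m, n, α) and (ℓ̃, m̃, ñ, α̃), and frame matrix T = (t_ij). Then a point p = (u,v) ∈ I × J is a singular point of x (i.e. x_u(p) × x_v(p) = 0) if and only if α(u) = 0, or α̃(v) = 0, or (t₃₁(p) = 0 and t₃₂(p) = 0). Moreover, μ(u) × μ̃(v) = 0 if and only if t₃₁(p) = 0 and t₃₂(p) = 0. -/
import Mathlib


open Matrix Real

noncomputable section

abbrev V3 : Type := Fin 3 → ℝ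

def cross3 (a b : V3) : V3 := crossProduct a b

def mu3 (nu1 nu2 : ℝ → V3) (t : ℝ) : V3 := cross3 (nu1 t) (nu2 t)

/-- A framed curve on a set `I`. -/
def IsFramedCurve (I : Set ℝ) (g nu1 nu2 : ℝ → V3) : Prop :=
  ContDiffOn ℝ (⊤ : ℕ∞) g I ∧ ContDiffOn ℝ (⊤ : ℕ∞) nu1 I ∧ ContDiffOn ℝ (⊤ : ℕ∞) nu2 I ∧
  ∀ t ∈ I, nu1 t ⬝ᵥ nu1 t = 1 ∧ nu2 t ⬝ᵥ nu2 t = 1 ∧ nu1 t ⬝ᵥ nu2 t = 0 ∧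
    deriv g t ⬝ᵥ nu1 t = 0 ∧ deriv g t ⬝ᵥ nu2 t = 0

def curvL (nu1 nu2 : ℝ → V3) (t : ℝ) : ℝ := deriv nu1 t ⬝ᵥ nu2 t
def curvM (nu1 nu2 : ℝ → V3) (t : ℝ) : ℝ := deriv nu1 t ⬝ᵥ mu3 nu1 nu2 t
def curvN (nu1 nu2 : ℝ → V3) (t : ℝ) : ℝ := deriv nu2 t ⬝ᵥ mu3 nu1 nu2 t
def curvA (g nu1 nu2 : ℝ → V3) (t : ℝ) : ℝ := deriv g t ⬝ᵥ mu3 nu1 nu2 t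

/-- Frame matrix of two framed curves. -/
def frameMatrix (nu1 nu2 w1 w2 : ℝ → V3) (u v : ℝ) : Matrix (Fin 3) (Fin 3) ℝ :=
  Matrix.of fun i j => ![w1 v, w2 v, mu3 w1 w2 v] i ⬝ᵥ ![nu1 u, nu2 u, mu3 nu1 nu2 u] j

def det3 (a b c : V3) : ℝ := Matrix.det (Matrix.of ![a, b, c])

def pduV (f : ℝ → ℝ → V3) (u v : ℝ) : V3 := deriv (fun u' => f u' v) u
def pdvV (f : ℝ → ℝ → V3) (u v : ℝ) : V3 := deriv (fun v' => f u v') v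
def pduS (f : ℝ → ℝ → ℝ) (u v : ℝ) : ℝ := deriv (fun u' => f u' v) u
def pdvS (f : ℝ → ℝ → ℝ) (u v : ℝ) : ℝ := deriv (fun v' => f u v') v

/-- `A`-equivalence of the germ of `f` at `p` with the germ of `g` at `0`. -/
def AEquivAt (f : ℝ × ℝ → V3) (p : ℝ × ℝ) (g : ℝ × ℝ → V3) : Prop :=
  ∃ (U : Set (ℝ × ℝ)) (W : Set V3) (φ φi : ℝ × ℝ → ℝ × ℝ) (Ψ Ψi : V3 → V3),
    IsOpen U ∧ p ∈ U ∧ IsOpen W ∧ f p ∈ W ∧ (∀ q ∈ U, f q ∈ W) ∧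
    IsOpen (φ '' U) ∧ IsOpen (Ψ '' W) ∧
    ContDiffOn ℝ (⊤ : ℕ∞) φ U ∧ ContDiffOn ℝ (⊤ : ℕ∞) φi (φ '' U) ∧
    (∀ q ∈ U, φi (φ q) = q) ∧ (∀ q ∈ φ '' U, φ (φi q) = q) ∧
    ContDiffOn ℝ (⊤ : ℕ∞) Ψ W ∧ ContDiffOn ℝ (⊤ : ℕ∞) Ψi (Ψ '' W) ∧
    (∀ y ∈ W, Ψi (Ψ y) = y) ∧ (∀ y ∈ Ψ '' W, Ψ (Ψi y) = y) ∧
    φ p = 0 ∧ Ψ (f p) = g 0 ∧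
    ∀ q ∈ U, Ψ (f q) = g (φ q)

def crossCapModel : ℝ × ℝ → V3 := fun p => ![p.1, p.1 * p.2, p.2 ^ 2]
def S1PlusModel : ℝ × ℝ → V3 := fun p => ![p.1, p.2 ^ 2, p.2 * (p.1 ^ 2 + p.2 ^ 2)]
def S1MinusModel : ℝ × ℝ → V3 := fun p => ![p.1, p.2 ^ 2, p.2 * (p.1 ^ 2 - p.2 ^ 2)]
def cuspidalEdgeModel : ℝ × ℝ → V3 := fun p => ![p.1, p.2 ^ 2, p.2 ^ 3]
def swallowtailModel : ℝ × ℝ → V3 :=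
  fun p => ![p.1, 4 * p.2 ^ 3 + 2 * p.1 * p.2, 3 * p.2 ^ 4 + p.1 * p.2 ^ 2]
def cuspidalCrossCapModel : ℝ × ℝ → V3 := fun p => ![p.1, p.2 ^ 2, p.1 * p.2 ^ 3]
def D4PlusModel : ℝ × ℝ → V3 :=
  fun p => ![p.1 * p.2, p.1 ^ 2 + 3 * p.2 ^ 2, p.1 ^ 2 * p.2 + p.2 ^ 3]
def D4MinusModel : ℝ × ℝ → V3 :=
  fun p => ![p.1 * p.2, p.1 ^ 2 - 3 * p.2 ^ 2, p.1 ^ 2 * p.2 - p.2 ^ 3]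

def HasCrossCapAt (f : ℝ × ℝ → V3) (p : ℝ × ℝ) : Prop := AEquivAt f p crossCapModel
def HasS1PlusAt (f : ℝ × ℝ → V3) (p : ℝ × ℝ) : Prop := AEquivAt f p S1PlusModel
def HasS1MinusAt (f : ℝ × ℝ → V3) (p : ℝ × ℝ) : Prop := AEquivAt f p S1MinusModel
def HasCuspidalEdgeAt (f : ℝ × ℝ → V3) (p : ℝ × ℝ) : Prop := AEquivAt f p cuspidalEdgeModel
def HasSwallowtailAt (f : ℝ × ℝ → V3) (p : ℝ × ℝ) : Prop := AEquivAt f p swallowtailModel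
def HasCuspidalCrossCapAt (f : ℝ × ℝ → V3) (p : ℝ × ℝ) : Prop := AEquivAt f p cuspidalCrossCapModel
def HasD4PlusAt (f : ℝ × ℝ → V3) (p : ℝ × ℝ) : Prop := AEquivAt f p D4PlusModel
def HasD4MinusAt (f : ℝ × ℝ → V3) (p : ℝ × ℝ) : Prop := AEquivAt f p D4MinusModel

/-- A non-degenerate space curve parametrized by arc length on `I`. -/
def IsUnitSpeedNondeg (I : Set ℝ) (g : ℝ → V3) : Prop :=
  ContDiffOn ℝ (⊤ : ℕ∞) g I ∧ (∀ s ∈ I, deriv g s ⬝ᵥ deriv g s = 1) ∧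
  ∀ s ∈ I, deriv (deriv g) s ≠ 0

def fcurv (g : ℝ → V3) (s : ℝ) : ℝ := Real.sqrt (deriv (deriv g) s ⬝ᵥ deriv (deriv g) s)
def fnor (g : ℝ → V3) (s : ℝ) : V3 := (fcurv g s)⁻¹ • deriv (deriv g) s
def fbin (g : ℝ → V3) (s : ℝ) : V3 := cross3 (deriv g s) (fnor g s)
def ftor (g : ℝ → V3) (s : ℝ) : ℝ :=
  det3 (deriv g s) (deriv (deriv g) s) (deriv (deriv (deriv g)) s) / (fcurv g s) ^ 2

/-- Generalised framed surface on `U ⊆ ℝ²`. -/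
def IsGeneralisedFramedSurface (U : Set (ℝ × ℝ)) (x N1 N2 : ℝ × ℝ → V3) : Prop :=
  ContDiffOn ℝ (⊤ : ℕ∞) x U ∧ ContDiffOn ℝ (⊤ : ℕ∞) N1 U ∧ ContDiffOn ℝ (⊤ : ℕ∞) N2 U ∧
  (∀ p ∈ U, N1 p ⬝ᵥ N1 p = 1 ∧ N2 p ⬝ᵥ N2 p = 1 ∧ N1 p ⬝ᵥ N2 p = 0) ∧
  ∃ A B : ℝ × ℝ → ℝ, ContDiffOn ℝ (⊤ : ℕ∞) A U ∧ ContDiffOn ℝ (⊤ : ℕ∞) B U ∧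
    ∀ p ∈ U, cross3 (deriv (fun u => x (u, p.2)) p.1) (deriv (fun v => x (p.1, v)) p.2)
      = A p • N1 p + B p • N2 p

/-- Framed surface on `U ⊆ ℝ²`. -/
def IsFramedSurface (U : Set (ℝ × ℝ)) (x nn ss : ℝ × ℝ → V3) : Prop :=
  ContDiffOn ℝ (⊤ : ℕ∞) x U ∧ ContDiffOn ℝ (⊤ : ℕ∞) nn U ∧ ContDiffOn ℝ (⊤ : ℕ∞) ss U ∧
  ∀ p ∈ U, nn p ⬝ᵥ nn p = 1 ∧ ss p ⬝ᵥ ss p = 1 ∧ nn p ⬝ᵥ ss p = 0 ∧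
    deriv (fun u => x (u, p.2)) p.1 ⬝ᵥ nn p = 0 ∧ deriv (fun v => x (p.1, v)) p.2 ⬝ᵥ nn p = 0

/-- The vector field `η = -α̃(v) ∂/∂u + α(u) t₃₃(u,v) ∂/∂v` applied to a map `f`. -/
def etaD (g nu1 nu2 gt w1 w2 : ℝ → V3) (f : ℝ → ℝ → V3) (u v : ℝ) : V3 :=
  (-(curvA gt w1 w2 v)) • pduV f u v
    + (curvA g nu1 nu2 u * frameMatrix nu1 nu2 w1 w2 u v 2 2) • pdvV f u v

/-- `φ = det(ξx, ηx, ηηx)` for the translation surface `x(u,v) = γ(u) + γ̃(v)`. -/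
def phiD (g nu1 nu2 gt w1 w2 : ℝ → V3) (u v : ℝ) : ℝ :=
  det3 (pduV (fun a b => g a + gt b) u v)
    (etaD g nu1 nu2 gt w1 w2 (fun a b => g a + gt b) u v)
    (etaD g nu1 nu2 gt w1 w2 (etaD g nu1 nu2 gt w1 w2 (fun a b => g a + gt b)) u v)

/-- `n(u,v) = sin θ(u,v) ν₁(u) + cos θ(u,v) ν₂(u)`. -/
def nvecD (nu1 nu2 : ℝ → V3) (θ : ℝ → ℝ → ℝ) (u v : ℝ) : V3 :=
  Real.sin (θ u v) • nu1 u + Real.cos (θ u v) • nu2 u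

/-- `t = n × μ`. -/
def tvecD (nu1 nu2 : ℝ → V3) (θ : ℝ → ℝ → ℝ) (u v : ℝ) : V3 :=
  cross3 (nvecD nu1 nu2 θ u v) (mu3 nu1 nu2 u)

lemma triple_exp (a b c : V3) : crossProduct a (crossProduct b c)
    = (a ⬝ᵥ c) • b - (a ⬝ᵥ b) • c := by
  ext i
  fin_cases i <;>
    simp [cross_apply, dotProduct, Fin.sum_univ_three] <;> ring

lemma cross_norm_one (a b : V3) (ha : a ⬝ᵥ a = 1) (hb : b ⬝ᵥ b = 1) (hab : a ⬝ᵥ b = 0) :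
    crossProduct a b ⬝ᵥ crossProduct a b = 1 := by
  rw [cross_dot_cross, ha, hb, hab, dotProduct_comm b a, hab]; ring

lemma proj_lemma (a b w : V3) (ha : a ⬝ᵥ a = 1) (hb : b ⬝ᵥ b = 1) (hab : a ⬝ᵥ b = 0)
    (hwa : w ⬝ᵥ a = 0) (hwb : w ⬝ᵥ b = 0) :
    w = (w ⬝ᵥ crossProduct a b) • crossProduct a b := by
  set m := crossProduct a b with hm
  have h0 : crossProduct w m = 0 := by
    rw [hm, triple_exp, hwb, hwa]; simp
  have h1 : crossProduct m (crossProduct m w) = (m ⬝ᵥ w) • m - (m ⬝ᵥ m) • w :=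
    triple_exp m m w
  have h2 : crossProduct m w = 0 := by
    have := cross_anticomm w m; rw [h0] at this; simpa using this.symm
  rw [h2, cross_norm_one a b ha hb hab] at h1
  simp only [map_zero, LinearMap.zero_apply] at h1
  have : (m ⬝ᵥ w) • m = w := by
    have := h1.symm; rw [one_smul] at this
    linear_combination (norm := module) this
  rw [dotProduct_comm]; exact this.symm

lemma claim2 (a b c d : V3)
    (ha : a ⬝ᵥ a = 1) (hb : b ⬝ᵥ b = 1) (hab : a ⬝ᵥ b = 0) :
    crossProduct (crossProduct a b) (crossProduct c d) = 0 ↔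
      (crossProduct c d ⬝ᵥ a = 0 ∧ crossProduct c d ⬝ᵥ b = 0) := by
  set m := crossProduct a b with hm
  set m' := crossProduct c d with hm'
  constructor
  · intro h
    have h1 : crossProduct m (crossProduct m m') = (m ⬝ᵥ m') • m - (m ⬝ᵥ m) • m' :=
      triple_exp m m m'
    rw [h, cross_norm_one a b ha hb hab, one_smul] at h1
    simp only [map_zero] at h1
    have hme : m' = (m ⬝ᵥ m') • m := by linear_combination (norm := module) h1
    have hma : m ⬝ᵥ a = 0 := by rw [hm, dotProduct_comm]; exact dot_self_cross a b
    have hmb : m ⬝ᵥ b = 0 := by rw [hm, dotProduct_comm]; exact dot_cross_self a b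
    constructor <;> rw [hme, smul_dotProduct]
    · rw [hma, smul_zero]
    · rw [hmb, smul_zero]
  · rintro ⟨h1, h2⟩
    have hme : m' = (m' ⬝ᵥ m) • m := proj_lemma a b m' ha hb hab h1 h2
    rw [hme, _root_.map_smul, cross_self, smul_zero]

lemma claim1 (a b c d p q : V3)
    (ha : a ⬝ᵥ a = 1) (hb : b ⬝ᵥ b = 1) (hab : a ⬝ᵥ b = 0)
    (hc : c ⬝ᵥ c = 1) (hd : d ⬝ᵥ d = 1) (hcd : c ⬝ᵥ d = 0)
    (hpa : p ⬝ᵥ a = 0) (hpb : p ⬝ᵥ b = 0) (hqc : q ⬝ᵥ c = 0) (hqd : q ⬝ᵥ d = 0) :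
    crossProduct p q = 0 ↔
      p ⬝ᵥ crossProduct a b = 0 ∨ q ⬝ᵥ crossProduct c d = 0 ∨
        (crossProduct c d ⬝ᵥ a = 0 ∧ crossProduct c d ⬝ᵥ b = 0) := by
  set m := crossProduct a b with hm
  set m' := crossProduct c d with hm'
  have hp : p = (p ⬝ᵥ m) • m := proj_lemma a b p ha hb hab hpa hpb
  have hq : q = (q ⬝ᵥ m') • m' := proj_lemma c d q hc hd hcd hqc hqd
  have key : crossProduct p q = ((p ⬝ᵥ m) * (q ⬝ᵥ m')) • crossProduct m m' := by
    conv_lhs => rw [hp, hq]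
    rw [_root_.map_smul, LinearMap.map_smul₂, smul_smul, mul_comm]
  rw [key, smul_eq_zero, mul_eq_zero, claim2 a b c d ha hb hab, or_assoc]

/-- characterization of singular points of the translation surface, and of the
linearly dependent condition. -/
theorem translationSurface_singular_iff
    (I J : Set ℝ) (hI : IsOpen I) (hIc : I.OrdConnected)
    (hJ : IsOpen J) (hJc : J.OrdConnected)
    (g nu1 nu2 gt w1 w2 : ℝ → V3)
    (hg : IsFramedCurve I g nu1 nu2) (hgt : IsFramedCurve J gt w1 w2) :
    ∀ u ∈ I, ∀ v ∈ J,
      (cross3 (pduV (fun a b => g a + gt b) u v) (pdvV (fun a b => g a + gt b) u v) = 0 ↔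
        curvA g nu1 nu2 u = 0 ∨ curvA gt w1 w2 v = 0 ∨
          (frameMatrix nu1 nu2 w1 w2 u v 2 0 = 0 ∧ frameMatrix nu1 nu2 w1 w2 u v 2 1 = 0)) ∧
      (cross3 (mu3 nu1 nu2 u) (mu3 w1 w2 v) = 0 ↔
        frameMatrix nu1 nu2 w1 w2 u v 2 0 = 0 ∧ frameMatrix nu1 nu2 w1 w2 u v 2 1 = 0) := by
  intro u hu v hv
  obtain ⟨-, -, -, hptw⟩ := hg
  obtain ⟨ha, hb, hab, hpa, hpb⟩ := hptw u hu
  obtain ⟨-, -, -, hptw'⟩ := hgt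
  obtain ⟨hc, hd, hcd, hqc, hqd⟩ := hptw' v hv
  have hpu : pduV (fun a b => g a + gt b) u v = deriv g u := by
    simp only [pduV]; exact deriv_add_const _
  have hpv : pdvV (fun a b => g a + gt b) u v = deriv gt v := by
    simp only [pdvV]; exact deriv_const_add _
  have hf0 : frameMatrix nu1 nu2 w1 w2 u v 2 0 = crossProduct (w1 v) (w2 v) ⬝ᵥ nu1 u := by
    simp [frameMatrix, mu3, cross3]
  have hf1 : frameMatrix nu1 nu2 w1 w2 u v 2 1 = crossProduct (w1 v) (w2 v) ⬝ᵥ nu2 u := by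
    simp [frameMatrix, mu3, cross3]
  constructor
  · rw [hpu, hpv, hf0, hf1]
    simp only [curvA, mu3, cross3]
    exact claim1 (nu1 u) (nu2 u) (w1 v) (w2 v) (deriv g u) (deriv gt v)
      ha hb hab hc hd hcd hpa hpb hqc hqd
  · rw [hf0, hf1]
    simp only [mu3, cross3]
    exact claim2 (nu1 u) (nu2 u) (w1 v) (w2 v) ha hb hab

end
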